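/- arXiv:2209.15450 — 6 statements merged into one kernel-verified Lean document; each statement's English description precedes it below -/
import Mathlib

section
/- Suppose the loss L is μ-strongly convex with μ = max{λ₂, λ₃}, and let ŵ ∈ ℝ^d be a global minimizer of L. Then ‖ŵ − P_k ŵ‖₂² ≤ (2 / (max{λ₂, λ₃} · N₁)) · ŵᵀ (I_d − P_k) ∑_{i∈S} ( x_i − m_i(P_k ŵ) ), where I_d is the d×d identity matrix. (Theorem 1 of the paper; note that x_i − m_i(P_k ŵ) = ( ∑_{j∈R_i} (x_i − x_j) exp(x_jᵀ P_k ŵ) ) / ( ∑_{j∈R_i} exp(x_jᵀ P_k ŵ) ).) -/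
open scoped RealInnerProductSpace BigOperators

set_option maxHeartbeats 1000000 in
/-- Theorem 1 of the paper: upper generalization error bound for a strongly convex
penalized Cox partial likelihood loss. -/
theorem excel_theorem_1
    (N d k : ℕ) (hN : 0 < N) (hd : 0 < d) (hk : 0 < k) (hkd : k ≤ d)
    (x : Fin N → EuclideanSpace ℝ (Fin d))
    (E : Fin N → ℕ) (hE : ∀ i, E i = 0 ∨ E i = 1)
    (T : Fin N → ℝ)
    (S : Finset (Fin N)) (hS : S = Finset.univ.filter fun i => E i = 1)
    (hSne : S.Nonempty)
    (N₁ : ℕ) (hN₁ : N₁ = S.card)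
    (R : Fin N → Finset (Fin N))
    (hR : ∀ i, R i = Finset.univ.filter fun j => T i ≤ T j)
    (K : Finset (Fin d)) (hK : K.card = k)
    (P : EuclideanSpace ℝ (Fin d) → EuclideanSpace ℝ (Fin d))
    (hP : ∀ w (a : Fin d), P w a = if a ∈ K then w a else 0)
    (lam2 lam3 : ℝ) (hlam2 : 0 < lam2) (hlam3 : 0 < lam3)
    (L : EuclideanSpace ℝ (Fin d) → ℝ)
    (hL : ∀ w, L w =
      -(1 / (N₁ : ℝ)) * ∑ i ∈ S, (⟪x i, w⟫ - Real.log (∑ j ∈ R i, Real.exp ⟪x j, w⟫))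
      - lam2 / (N₁ : ℝ) * ∑ i ∈ S, (⟪x i, P w⟫ - Real.log (∑ j ∈ R i, Real.exp ⟪x j, P w⟫))
      + lam3 / 2 * ‖w‖ ^ 2)
    (m : EuclideanSpace ℝ (Fin d) → Fin N → EuclideanSpace ℝ (Fin d))
    (hm : ∀ u i, m u i =
      (∑ j ∈ R i, Real.exp ⟪x j, u⟫)⁻¹ • ∑ j ∈ R i, Real.exp ⟪x j, u⟫ • x j)
    (hstrong : ConvexOn ℝ Set.univ fun w => L w - max lam2 lam3 / 2 * ‖w‖ ^ 2)
    (wh : EuclideanSpace ℝ (Fin d)) (hwh : ∀ w, L wh ≤ L w) :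
    ‖wh - P wh‖ ^ 2 ≤ 2 / (max lam2 lam3 * (N₁ : ℝ)) *
      ⟪wh, (∑ i ∈ S, (x i - m (P wh) i)) - P (∑ i ∈ S, (x i - m (P wh) i))⟫ := by
  set μ : ℝ := max lam2 lam3 with hμdef
  have hμ : 0 < μ := lt_of_lt_of_le hlam2 (le_max_left _ _)
  have hN₁pos : (0:ℝ) < (N₁ : ℝ) := by
    have : 0 < S.card := Finset.card_pos.mpr hSne
    exact_mod_cast hN₁ ▸ this
  -- inner product as a sum
  have hinner : ∀ u v : EuclideanSpace ℝ (Fin d), ⟪u, v⟫ = ∑ a, u a * v a := by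
    intro u v
    simp [PiLp.inner_apply, RCLike.inner_apply, mul_comm]
  -- projection facts
  have hPP : P (P wh) = P wh := by
    ext a
    rw [hP, hP]
    by_cases h : a ∈ K <;> simp [h, hP]
  have hproj : ∀ u v : EuclideanSpace ℝ (Fin d), ⟪u, v - P v⟫ = ⟪u - P u, v⟫ := by
    intro u v
    rw [hinner, hinner]
    refine Finset.sum_congr rfl fun a _ => ?_
    have h1 : (v - P v) a = v a - P v a := rfl
    have h2 : (u - P u) a = u a - P u a := rfl
    rw [h1, h2, hP, hP]
    by_cases h : a ∈ K <;> simp [h] <;> ring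
  have hnorm : ‖wh‖ ^ 2 - ‖P wh‖ ^ 2 = ‖wh - P wh‖ ^ 2 := by
    rw [← real_inner_self_eq_norm_sq, ← real_inner_self_eq_norm_sq,
      ← real_inner_self_eq_norm_sq, hinner, hinner, hinner, ← Finset.sum_sub_distrib]
    refine Finset.sum_congr rfl fun a _ => ?_
    have h1 : (wh - P wh) a = wh a - P wh a := rfl
    rw [h1, hP]
    by_cases h : a ∈ K <;> simp [h] <;> ring
  set C : ℝ := ‖wh - P wh‖ ^ 2 with hCdef
  set D : ℝ := L (P wh) - L wh with hDdef
  -- strong convexity at the minimizer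
  have key : ∀ t : ℝ, 0 < t → t < 1 → μ / 2 * ((1 - t) * C) ≤ D := by
    intro t ht0 ht1
    have h1t : (0:ℝ) ≤ 1 - t := by linarith
    have hcvx := hstrong.2 (Set.mem_univ wh) (Set.mem_univ (P wh)) h1t ht0.le (by ring)
    simp only [smul_eq_mul] at hcvx
    have hz := hwh ((1 - t) • wh + t • P wh)
    have hid : ‖(1 - t) • wh + t • (P wh)‖ ^ 2
        = (1-t)^2 * ‖wh‖^2 + 2*(1-t)*t*⟪wh, P wh⟫ + t^2 * ‖P wh‖^2 := by
      rw [norm_add_sq_real, real_inner_smul_left, real_inner_smul_right,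
        norm_smul, norm_smul, mul_pow, mul_pow, Real.norm_eq_abs, Real.norm_eq_abs,
        sq_abs, sq_abs]
      ring
    have hsub : C = ‖wh‖^2 - 2*⟪wh, P wh⟫ + ‖P wh‖^2 := by
      rw [hCdef, norm_sub_sq_real]
    have hiden : μ / 2 * ((1-t) * ‖wh‖^2 + t * ‖P wh‖^2 - ‖(1 - t) • wh + t • (P wh)‖^2)
        = μ / 2 * (t * ((1-t) * C)) := by
      rw [hid, hsub]; ring
    have h7 : t * (μ / 2 * ((1 - t) * C)) ≤ t * D := by
      have hDexp : D = L (P wh) - L wh := hDdef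
      nlinarith [hcvx, hz, hiden]
    exact le_of_mul_le_mul_left h7 ht0
  have hD0 : 0 ≤ D := sub_nonneg.mpr (hwh (P wh))
  have hstrongmin : μ / 2 * C ≤ D := by
    by_contra hcon
    push_neg at hcon
    set c : ℝ := μ / 2 * C with hcdef
    have hCpos : 0 < C := by
      by_contra hC
      push_neg at hC
      have : c ≤ 0 := mul_nonpos_of_nonneg_of_nonpos (by positivity) hC
      linarith
    have hcpos : 0 < c := by positivity
    have ht0 : 0 < (c - D) / (2 * c) := div_pos (by linarith) (by positivity)
    have ht1 : (c - D) / (2 * c) < 1 := by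
      rw [div_lt_one (by positivity)]; linarith
    have := key _ ht0 ht1
    have heq : μ / 2 * ((1 - (c - D) / (2 * c)) * C) = (c + D) / 2 := by
      field_simp [hcdef]
      ring
    rw [heq] at this
    linarith
  -- per-term convexity bound for the log-sum-exp
  have hterm : ∀ i ∈ S,
      (⟪x i, wh⟫ - Real.log (∑ j ∈ R i, Real.exp ⟪x j, wh⟫))
      - (⟪x i, P wh⟫ - Real.log (∑ j ∈ R i, Real.exp ⟪x j, P wh⟫))
      ≤ ⟪x i - m (P wh) i, wh - P wh⟫ := by
    intro i _
    set B : ℝ := ∑ j ∈ R i, Real.exp ⟪x j, P wh⟫ with hBdef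
    set A : ℝ := ∑ j ∈ R i, Real.exp ⟪x j, wh⟫ with hAdef
    have hiR : i ∈ R i := by rw [hR]; simp
    have hBpos : 0 < B := Finset.sum_pos (fun j _ => Real.exp_pos _) ⟨i, hiR⟩
    have hApos : 0 < A := Finset.sum_pos (fun j _ => Real.exp_pos _) ⟨i, hiR⟩
    set p : Fin N → ℝ := fun j => Real.exp ⟪x j, P wh⟫ / B with hpdef
    have hp0 : ∀ j ∈ R i, 0 ≤ p j := fun j _ => by positivity
    have hp1 : ∑ j ∈ R i, p j = 1 := by
      rw [hpdef, ← Finset.sum_div, ← hBdef, div_self hBpos.ne']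
    have hjen : Real.exp (∑ j ∈ R i, p j * ⟪x j, wh - P wh⟫)
        ≤ ∑ j ∈ R i, p j * Real.exp ⟪x j, wh - P wh⟫ := by
      have h := convexOn_exp.map_sum_le (f := Real.exp) (p := fun j => ⟪x j, wh - P wh⟫)
        hp0 hp1 (fun j _ => Set.mem_univ _)
      simpa only [smul_eq_mul] using h
    have hrhs : ∑ j ∈ R i, p j * Real.exp ⟪x j, wh - P wh⟫ = A / B := by
      rw [hAdef, Finset.sum_div]
      refine Finset.sum_congr rfl fun j _ => ?_
      rw [hpdef, inner_sub_right, Real.exp_sub]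
      rw [div_mul_div_comm, mul_comm B (Real.exp _),
        mul_div_mul_left _ _ (Real.exp_pos _).ne']
    have hlhs : ∑ j ∈ R i, p j * ⟪x j, wh - P wh⟫ = ⟪m (P wh) i, wh - P wh⟫ := by
      rw [hm, real_inner_smul_left, sum_inner, Finset.mul_sum]
      refine Finset.sum_congr rfl fun j _ => ?_
      rw [real_inner_smul_left, hpdef, ← hBdef]
      field_simp
    rw [hrhs] at hjen
    have hlog : ⟪m (P wh) i, wh - P wh⟫ ≤ Real.log A - Real.log B := by
      have h1 : Real.exp ⟪m (P wh) i, wh - P wh⟫ ≤ A / B := by rwa [hlhs] at hjen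
      have h2 := Real.log_le_log (Real.exp_pos _) h1
      rwa [Real.log_exp, Real.log_div hApos.ne' hBpos.ne'] at h2
    have hx : ⟪x i, wh⟫ - ⟪x i, P wh⟫ = ⟪x i, wh - P wh⟫ := (inner_sub_right _ _ _).symm
    rw [inner_sub_left]
    linarith
  -- bound D
  set v : EuclideanSpace ℝ (Fin d) := ∑ i ∈ S, (x i - m (P wh) i) with hvdef
  set I : ℝ := ⟪wh, v - P v⟫ with hIdef
  have hsum : (∑ i ∈ S, (⟪x i, wh⟫ - Real.log (∑ j ∈ R i, Real.exp ⟪x j, wh⟫)))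
      - (∑ i ∈ S, (⟪x i, P wh⟫ - Real.log (∑ j ∈ R i, Real.exp ⟪x j, P wh⟫))) ≤ I := by
    rw [← Finset.sum_sub_distrib]
    have h1 : ∑ i ∈ S, ((⟪x i, wh⟫ - Real.log (∑ j ∈ R i, Real.exp ⟪x j, wh⟫))
        - (⟪x i, P wh⟫ - Real.log (∑ j ∈ R i, Real.exp ⟪x j, P wh⟫)))
        ≤ ∑ i ∈ S, ⟪x i - m (P wh) i, wh - P wh⟫ :=
      Finset.sum_le_sum hterm
    have h2 : ∑ i ∈ S, ⟪x i - m (P wh) i, wh - P wh⟫ = ⟪v, wh - P wh⟫ :=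
      (sum_inner _ _ _).symm
    have h3 : ⟪v, wh - P wh⟫ = I := by
      rw [hIdef, hproj wh v, real_inner_comm]
    linarith
  have hDle : D ≤ 1 / (N₁:ℝ) * I := by
    have hLP := hL (P wh)
    have hLw := hL wh
    rw [hPP] at hLP
    have hD : D = 1 / (N₁:ℝ) * ((∑ i ∈ S, (⟪x i, wh⟫ - Real.log (∑ j ∈ R i, Real.exp ⟪x j, wh⟫)))
        - (∑ i ∈ S, (⟪x i, P wh⟫ - Real.log (∑ j ∈ R i, Real.exp ⟪x j, P wh⟫))))
        + lam3 / 2 * (‖P wh‖^2 - ‖wh‖^2) := by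
      rw [hDdef, hLP, hLw]
      ring
    have hneg : lam3 / 2 * (‖P wh‖^2 - ‖wh‖^2) ≤ 0 := by
      have : ‖P wh‖^2 - ‖wh‖^2 = -C := by linarith [hnorm]
      rw [this]
      have : 0 ≤ C := by positivity
      nlinarith
    have := mul_le_mul_of_nonneg_left hsum (by positivity : (0:ℝ) ≤ 1 / (N₁:ℝ))
    linarith
  -- conclude
  have hfin : μ / 2 * C ≤ 1 / (N₁:ℝ) * I := le_trans hstrongmin hDle
  have hgoal : C ≤ 2 / (μ * (N₁:ℝ)) * I := by
    have h := mul_le_mul_of_nonneg_right hfin hN₁pos.le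
    have h2 : (1 / (N₁:ℝ) * I) * (N₁:ℝ) = I := by field_simp
    rw [div_mul_eq_mul_div, le_div_iff₀ (by positivity)]
    nlinarith [h, h2]
  exact hgoal
end

section
/- The gradient of the loss L is Lipschitz continuous: for all u, v ∈ ℝ^d, ‖∇L(u) − ∇L(v)‖₂ ≤ ( (1+λ₂)·M² + λ₃ ) · ‖u − v‖₂, where M = max_{1≤j≤N} ‖x_j‖₂. (Lemma 1 of the paper, with the explicit Lipschitz constant obtained from its Hessian bound.) -/
open scoped RealInnerProductSpace BigOperators

open Finset in
/-- Covariance bound for a probability vector `p` and bounded sequences `a`, `c`. -/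
lemma excel_cov_bound {ι : Type*} (t : Finset ι) (p a c : ι → ℝ)
    (hp : ∀ j ∈ t, 0 ≤ p j) (hp1 : ∑ j ∈ t, p j = 1)
    {A C : ℝ} (hA : 0 ≤ A) (hC : 0 ≤ C)
    (ha : ∀ j ∈ t, |a j| ≤ A) (hc : ∀ j ∈ t, |c j| ≤ C) :
    |∑ j ∈ t, p j * (a j * c j) - (∑ j ∈ t, p j * a j) * (∑ j ∈ t, p j * c j)| ≤ A * C := by
  set ab := ∑ j ∈ t, p j * a j with hab
  set cb := ∑ j ∈ t, p j * c j with hcb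
  have key : ∑ j ∈ t, p j * (a j * c j) - ab * cb
      = ∑ j ∈ t, (Real.sqrt (p j) * (a j - ab)) * (Real.sqrt (p j) * (c j - cb)) := by
    have : ∀ j ∈ t, (Real.sqrt (p j) * (a j - ab)) * (Real.sqrt (p j) * (c j - cb))
        = p j * (a j * c j) - cb * (p j * a j) - ab * (p j * c j) + (ab * cb) * p j := by
      intro j hj
      have : Real.sqrt (p j) * Real.sqrt (p j) = p j := Real.mul_self_sqrt (hp j hj)
      linear_combination ((a j - ab) * (c j - cb)) * this
    rw [Finset.sum_congr rfl this]
    rw [Finset.sum_add_distrib, Finset.sum_sub_distrib, Finset.sum_sub_distrib,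
      ← Finset.mul_sum, ← Finset.mul_sum, ← Finset.mul_sum, hp1, ← hab, ← hcb]
    ring
  have hvar : ∀ (f : ι → ℝ) (B : ℝ), 0 ≤ B → (∀ j ∈ t, |f j| ≤ B) →
      ∑ j ∈ t, (Real.sqrt (p j) * (f j - ∑ j ∈ t, p j * f j)) ^ 2 ≤ B ^ 2 := by
    intro f B hB hf
    set fb := ∑ j ∈ t, p j * f j with hfb
    have expand : ∀ j ∈ t, (Real.sqrt (p j) * (f j - fb)) ^ 2
        = p j * (f j)^2 - (2 * fb) * (p j * f j) + fb^2 * p j := by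
      intro j hj
      have : Real.sqrt (p j) * Real.sqrt (p j) = p j := Real.mul_self_sqrt (hp j hj)
      linear_combination ((f j - fb) * (f j - fb)) * this
    rw [Finset.sum_congr rfl expand, Finset.sum_add_distrib, Finset.sum_sub_distrib,
      ← Finset.mul_sum, ← Finset.mul_sum, hp1, ← hfb]
    have h1 : ∑ j ∈ t, p j * (f j)^2 ≤ B ^ 2 := by
      calc ∑ j ∈ t, p j * (f j)^2 ≤ ∑ j ∈ t, p j * B^2 := by
            apply Finset.sum_le_sum
            intro j hj
            have := hf j hj
            have h2 : (f j)^2 ≤ B^2 := by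
              nlinarith [abs_nonneg (f j), le_abs_self (f j), neg_abs_le (f j)]
            exact mul_le_mul_of_nonneg_left h2 (hp j hj)
        _ = B ^ 2 := by rw [← Finset.sum_mul, hp1, one_mul]
    nlinarith [sq_nonneg fb]
  have cs := Finset.sum_mul_sq_le_sq_mul_sq t
    (fun j => Real.sqrt (p j) * (a j - ab)) (fun j => Real.sqrt (p j) * (c j - cb))
  have h1 := hvar a A hA ha
  have h2 := hvar c C hC hc
  rw [key]
  have hsq : (∑ j ∈ t, (Real.sqrt (p j) * (a j - ab)) * (Real.sqrt (p j) * (c j - cb))) ^ 2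
      ≤ (A * C) ^ 2 := by
    calc _ ≤ _ := cs
      _ ≤ A^2 * C^2 := by
          apply mul_le_mul h1 h2 (Finset.sum_nonneg fun j _ => sq_nonneg _) (by positivity)
      _ = (A*C)^2 := by ring
  set X := ∑ j ∈ t, (Real.sqrt (p j) * (a j - ab)) * (Real.sqrt (p j) * (c j - cb)) with hX
  nlinarith [sq_abs X, abs_nonneg X, mul_nonneg hA hC]

/-- The increment of a weighted softmax average along a segment is bounded. -/
lemma excel_lse_scalar {ι : Type*} (t : Finset ι) (ht : t.Nonempty) (a b c : ι → ℝ)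
    {A C : ℝ} (hA : 0 ≤ A) (hC : 0 ≤ C)
    (ha : ∀ j ∈ t, |a j| ≤ A) (hc : ∀ j ∈ t, |c j| ≤ C) :
    |(∑ j ∈ t, a j * Real.exp (b j + c j)) / (∑ j ∈ t, Real.exp (b j + c j))
      - (∑ j ∈ t, a j * Real.exp (b j)) / (∑ j ∈ t, Real.exp (b j))| ≤ A * C := by
  have hZpos : ∀ s : ℝ, 0 < ∑ j ∈ t, Real.exp (b j + s * c j) :=
    fun s => Finset.sum_pos (fun j _ => Real.exp_pos _) ht
  have hψ : ∀ s : ℝ, HasDerivAt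
      (fun s => (∑ j ∈ t, a j * Real.exp (b j + s * c j))
        / (∑ j ∈ t, Real.exp (b j + s * c j)))
      (((∑ j ∈ t, a j * (Real.exp (b j + s * c j) * c j))
          * (∑ j ∈ t, Real.exp (b j + s * c j))
        - (∑ j ∈ t, a j * Real.exp (b j + s * c j))
          * (∑ j ∈ t, Real.exp (b j + s * c j) * c j))
        / (∑ j ∈ t, Real.exp (b j + s * c j)) ^ 2) s := by
    intro s
    have hq : ∀ j : ι, HasDerivAt (fun s : ℝ => Real.exp (b j + s * c j))
        (Real.exp (b j + s * c j) * c j) s :=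
      fun j => ((hasDerivAt_mul_const (c j)).const_add (b j)).exp
    exact (HasDerivAt.fun_sum fun j _ => (hq j).const_mul (a j)).div
      (HasDerivAt.fun_sum fun j _ => hq j) (hZpos s).ne'
  have hbound : ∀ s ∈ Set.Ico (0:ℝ) 1,
      ‖((∑ j ∈ t, a j * (Real.exp (b j + s * c j) * c j))
          * (∑ j ∈ t, Real.exp (b j + s * c j))
        - (∑ j ∈ t, a j * Real.exp (b j + s * c j))
          * (∑ j ∈ t, Real.exp (b j + s * c j) * c j))
        / (∑ j ∈ t, Real.exp (b j + s * c j)) ^ 2‖ ≤ A * C := by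
    intro s _
    set Z := ∑ j ∈ t, Real.exp (b j + s * c j) with hZ
    have hZ0 : Z ≠ 0 := (hZpos s).ne'
    have hps : ∀ j ∈ t, 0 ≤ Real.exp (b j + s * c j) / Z := fun j _ =>
      div_nonneg (Real.exp_pos _).le (hZpos s).le
    have hp1 : ∑ j ∈ t, Real.exp (b j + s * c j) / Z = 1 := by
      rw [← Finset.sum_div, ← hZ, div_self hZ0]
    have hcov := excel_cov_bound t (fun j => Real.exp (b j + s * c j) / Z) a c hps hp1
      hA hC ha hc
    have h1 : ∑ j ∈ t, (Real.exp (b j + s * c j) / Z) * (a j * c j)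
        = (∑ j ∈ t, a j * (Real.exp (b j + s * c j) * c j)) / Z := by
      rw [Finset.sum_div]; exact Finset.sum_congr rfl fun j _ => by ring
    have h2 : ∑ j ∈ t, (Real.exp (b j + s * c j) / Z) * a j
        = (∑ j ∈ t, a j * Real.exp (b j + s * c j)) / Z := by
      rw [Finset.sum_div]; exact Finset.sum_congr rfl fun j _ => by ring
    have h3 : ∑ j ∈ t, (Real.exp (b j + s * c j) / Z) * c j
        = (∑ j ∈ t, Real.exp (b j + s * c j) * c j) / Z := by
      rw [Finset.sum_div]; exact Finset.sum_congr rfl fun j _ => by ring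
    rw [h1, h2, h3] at hcov
    rw [Real.norm_eq_abs]
    have hid : ((∑ j ∈ t, a j * (Real.exp (b j + s * c j) * c j)) * Z
        - (∑ j ∈ t, a j * Real.exp (b j + s * c j))
          * (∑ j ∈ t, Real.exp (b j + s * c j) * c j)) / Z ^ 2
        = (∑ j ∈ t, a j * (Real.exp (b j + s * c j) * c j)) / Z
          - ((∑ j ∈ t, a j * Real.exp (b j + s * c j)) / Z)
            * ((∑ j ∈ t, Real.exp (b j + s * c j) * c j) / Z) := by
      field_simp
    rw [hid]
    exact hcov
  have hseg := norm_image_sub_le_of_norm_deriv_le_segment_01'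
    (fun s _ => (hψ s).hasDerivWithinAt) hbound
  simp only [one_mul, zero_mul, add_zero] at hseg
  rw [Real.norm_eq_abs] at hseg
  exact hseg

section GradAux

variable {F : Type*} [NormedAddCommGroup F] [InnerProductSpace ℝ F] [CompleteSpace F]

lemma excel_hasGradientAt_of_fderiv {f : F → ℝ} {D : F →L[ℝ] ℝ} {g x : F}
    (hf : HasFDerivAt f D x) (hg : ∀ h, D h = ⟪g, h⟫) : HasGradientAt f g x := by
  rw [hasGradientAt_iff_hasFDerivAt]
  convert hf using 1
  all_goals try rfl
  ext h
  simp [InnerProductSpace.toDual_apply_apply, hg h]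

lemma excel_lse_hasGradientAt {ι : Type*} (y : ι → F) (t : Finset ι) (ht : t.Nonempty) (w : F) :
    HasGradientAt (fun w => Real.log (∑ j ∈ t, Real.exp ⟪y j, w⟫))
      ((∑ j ∈ t, Real.exp ⟪y j, w⟫)⁻¹ • ∑ j ∈ t, Real.exp ⟪y j, w⟫ • y j) w := by
  have hZ : 0 < ∑ j ∈ t, Real.exp ⟪y j, w⟫ :=
    Finset.sum_pos (fun j _ => Real.exp_pos _) ht
  have hsum : HasFDerivAt (fun w : F => ∑ j ∈ t, Real.exp ⟪y j, w⟫)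
      (∑ j ∈ t, Real.exp ⟪y j, w⟫ • innerSL ℝ (y j)) w :=
    HasFDerivAt.fun_sum fun j _ => ((innerSL ℝ (y j)).hasFDerivAt).exp
  refine excel_hasGradientAt_of_fderiv (hsum.log hZ.ne') fun h => ?_
  simp only [ContinuousLinearMap.coe_smul', Pi.smul_apply, ContinuousLinearMap.coe_sum',
    Finset.sum_apply, innerSL_apply_apply, smul_eq_mul, inner_smul_left, inner_sum,
    real_inner_smul_left, RCLike.star_def, conj_trivial]
  rw [sum_inner]
  congr 1
  exact Finset.sum_congr rfl fun j _ => by rw [real_inner_smul_left]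

omit [CompleteSpace F] in
lemma excel_lse_grad_lip {ι : Type*} (y : ι → F) (t : Finset ι) (ht : t.Nonempty) {M : ℝ}
    (hM : ∀ j ∈ t, ‖y j‖ ≤ M) (u v : F) :
    ‖((∑ j ∈ t, Real.exp ⟪y j, u⟫)⁻¹ • ∑ j ∈ t, Real.exp ⟪y j, u⟫ • y j)
      - ((∑ j ∈ t, Real.exp ⟪y j, v⟫)⁻¹ • ∑ j ∈ t, Real.exp ⟪y j, v⟫ • y j)‖
      ≤ M ^ 2 * ‖u - v‖ := by
  obtain ⟨j₀, hj₀⟩ := ht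
  have hM0 : 0 ≤ M := (norm_nonneg _).trans (hM j₀ hj₀)
  set e := ((∑ j ∈ t, Real.exp ⟪y j, u⟫)⁻¹ • ∑ j ∈ t, Real.exp ⟪y j, u⟫ • y j)
      - ((∑ j ∈ t, Real.exp ⟪y j, v⟫)⁻¹ • ∑ j ∈ t, Real.exp ⟪y j, v⟫ • y j) with he
  by_cases he0 : e = 0
  · rw [he0, norm_zero]; positivity
  have ha : ∀ j ∈ t, |⟪y j, e⟫| ≤ M * ‖e‖ := fun j hj =>
    (abs_real_inner_le_norm _ _).trans
      (mul_le_mul_of_nonneg_right (hM j hj) (norm_nonneg _))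
  have hc : ∀ j ∈ t, |⟪y j, u - v⟫| ≤ M * ‖u - v‖ := fun j hj =>
    (abs_real_inner_le_norm _ _).trans
      (mul_le_mul_of_nonneg_right (hM j hj) (norm_nonneg _))
  have key := excel_lse_scalar t ⟨j₀, hj₀⟩ (fun j => ⟪y j, e⟫) (fun j => ⟪y j, v⟫)
    (fun j => ⟪y j, u - v⟫) (mul_nonneg hM0 (norm_nonneg _))
    (mul_nonneg hM0 (norm_nonneg _)) ha hc
  have hbc : ∀ j : ι, ⟪y j, v⟫ + ⟪y j, u - v⟫ = ⟪y j, u⟫ := by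
    intro j; rw [inner_sub_right]; ring
  simp only [hbc] at key
  have hinnerG : ∀ w : F,
      ⟪(∑ j ∈ t, Real.exp ⟪y j, w⟫)⁻¹ • ∑ j ∈ t, Real.exp ⟪y j, w⟫ • y j, e⟫
      = (∑ j ∈ t, ⟪y j, e⟫ * Real.exp ⟪y j, w⟫) / (∑ j ∈ t, Real.exp ⟪y j, w⟫) := by
    intro w
    rw [real_inner_smul_left, sum_inner, div_eq_inv_mul]
    congr 1
    exact Finset.sum_congr rfl fun j _ => by rw [real_inner_smul_left]; ring
  have hsq : ‖e‖ ^ 2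
      = (∑ j ∈ t, ⟪y j, e⟫ * Real.exp ⟪y j, u⟫) / (∑ j ∈ t, Real.exp ⟪y j, u⟫)
      - (∑ j ∈ t, ⟪y j, e⟫ * Real.exp ⟪y j, v⟫) / (∑ j ∈ t, Real.exp ⟪y j, v⟫) := by
    rw [← hinnerG u, ← hinnerG v, ← inner_sub_left, ← he, real_inner_self_eq_norm_sq]
  rw [← hsq] at key
  have hepos : 0 < ‖e‖ := norm_pos_iff.mpr he0
  have h2 : ‖e‖ ^ 2 ≤ (M * ‖e‖) * (M * ‖u - v‖) := (le_abs_self _).trans key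
  nlinarith [h2, hepos]

lemma excel_hga_add {f g : F → ℝ} {f' g' x : F}
    (hf : HasGradientAt f f' x) (hg : HasGradientAt g g' x) :
    HasGradientAt (fun w => f w + g w) (f' + g') x :=
  excel_hasGradientAt_of_fderiv (hf.hasFDerivAt.add hg.hasFDerivAt) fun h => by
    simp [InnerProductSpace.toDual_apply_apply, inner_add_left]

lemma excel_hga_sub {f g : F → ℝ} {f' g' x : F}
    (hf : HasGradientAt f f' x) (hg : HasGradientAt g g' x) :
    HasGradientAt (fun w => f w - g w) (f' - g') x :=
  excel_hasGradientAt_of_fderiv (hf.hasFDerivAt.sub hg.hasFDerivAt) fun h => by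
    simp [InnerProductSpace.toDual_apply_apply, inner_sub_left]

lemma excel_hga_const_mul {f : F → ℝ} {f' x : F} (c : ℝ) (hf : HasGradientAt f f' x) :
    HasGradientAt (fun w => c * f w) (c • f') x :=
  excel_hasGradientAt_of_fderiv (hf.hasFDerivAt.const_mul c) fun h => by
    simp [InnerProductSpace.toDual_apply_apply, real_inner_smul_left]

lemma excel_hga_sum {ι : Type*} {t : Finset ι} {f : ι → F → ℝ} {f' : ι → F} {x : F}
    (hf : ∀ i ∈ t, HasGradientAt (f i) (f' i) x) :
    HasGradientAt (fun w => ∑ i ∈ t, f i w) (∑ i ∈ t, f' i) x :=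
  excel_hasGradientAt_of_fderiv (HasFDerivAt.fun_sum fun i hi => (hf i hi).hasFDerivAt) fun h => by
    simp [InnerProductSpace.toDual_apply_apply, sum_inner]

lemma excel_hga_inner (v x : F) : HasGradientAt (fun w => ⟪v, w⟫) v x :=
  excel_hasGradientAt_of_fderiv (innerSL ℝ v).hasFDerivAt fun h => rfl

lemma excel_hga_norm_sq (x : F) : HasGradientAt (fun w : F => ‖w‖ ^ 2) ((2:ℝ) • x) x := by
  refine excel_hasGradientAt_of_fderiv (hasFDerivAt_id x).norm_sq fun h => ?_
  simp [two_smul, real_inner_smul_left, two_mul, inner_add_left]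

end GradAux

/-- Lemma 1 of the paper: the gradient of the loss L is Lipschitz continuous with constant (1+λ₂)M² + λ₃, where M is the maximum Euclidean norm of the sample vectors. -/
theorem excel_lemma_1
    (N d k : ℕ) (hN : 0 < N) (hd : 0 < d) (hk : 0 < k) (hkd : k ≤ d)
    (x : Fin N → EuclideanSpace ℝ (Fin d))
    (E : Fin N → ℕ) (hE : ∀ i, E i = 0 ∨ E i = 1)
    (T : Fin N → ℝ)
    (S : Finset (Fin N)) (hS : S = Finset.univ.filter fun i => E i = 1)
    (hSne : S.Nonempty)
    (N₁ : ℕ) (hN₁ : N₁ = S.card)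
    (R : Fin N → Finset (Fin N))
    (hR : ∀ i, R i = Finset.univ.filter fun j => T i ≤ T j)
    (K : Finset (Fin d)) (hK : K.card = k)
    (P : EuclideanSpace ℝ (Fin d) → EuclideanSpace ℝ (Fin d))
    (hP : ∀ w (a : Fin d), P w a = if a ∈ K then w a else 0)
    (lam2 lam3 : ℝ) (hlam2 : 0 < lam2) (hlam3 : 0 < lam3)
    (L : EuclideanSpace ℝ (Fin d) → ℝ)
    (hL : ∀ w, L w =
      -(1 / (N₁ : ℝ)) * ∑ i ∈ S, (⟪x i, w⟫ - Real.log (∑ j ∈ R i, Real.exp ⟪x j, w⟫))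
      - lam2 / (N₁ : ℝ) * ∑ i ∈ S, (⟪x i, P w⟫ - Real.log (∑ j ∈ R i, Real.exp ⟪x j, P w⟫))
      + lam3 / 2 * ‖w‖ ^ 2)
    (M : ℝ) (hM : IsGreatest (Set.range fun j => ‖x j‖) M) :
    ∀ u v : EuclideanSpace ℝ (Fin d),
      ‖gradient L u - gradient L v‖ ≤ ((1 + lam2) * M ^ 2 + lam3) * ‖u - v‖ := by
  classical
  intro u v
  set y : Fin N → EuclideanSpace ℝ (Fin d) := fun j => P (x j) with hy
  have hinner : ∀ (j : Fin N) (w : EuclideanSpace ℝ (Fin d)), ⟪x j, P w⟫ = ⟪y j, w⟫ := by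
    intro j w
    simp only [PiLp.inner_apply, RCLike.inner_apply, conj_trivial, hy]
    refine Finset.sum_congr rfl fun a _ => ?_
    rw [hP, hP]
    by_cases h : a ∈ K <;> simp [h]
  have hynorm : ∀ j, ‖y j‖ ≤ ‖x j‖ := by
    intro j
    rw [EuclideanSpace.norm_eq, EuclideanSpace.norm_eq]
    apply Real.sqrt_le_sqrt
    apply Finset.sum_le_sum
    intro a _
    have : y j a = if a ∈ K then x j a else 0 := by rw [hy]; exact hP (x j) a
    rw [this]
    by_cases h : a ∈ K <;> simp [h] <;> positivity
  have hMub : ∀ j, ‖x j‖ ≤ M := fun j => hM.2 ⟨j, rfl⟩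
  have hM0 : 0 ≤ M := by
    obtain ⟨j, hj⟩ := hM.1
    exact hj ▸ norm_nonneg _
  have hRne : ∀ i : Fin N, (R i).Nonempty := fun i => ⟨i, by rw [hR]; simp⟩
  have hN₁pos : (0:ℝ) < (N₁:ℝ) := by
    have : 0 < N₁ := hN₁ ▸ Finset.card_pos.mpr hSne
    exact_mod_cast this
  -- the gradient of L
  set Gx : Finset (Fin N) → EuclideanSpace ℝ (Fin d) → EuclideanSpace ℝ (Fin d) :=
    fun tt w => (∑ j ∈ tt, Real.exp ⟪x j, w⟫)⁻¹ • ∑ j ∈ tt, Real.exp ⟪x j, w⟫ • x j with hGx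
  set Gy : Finset (Fin N) → EuclideanSpace ℝ (Fin d) → EuclideanSpace ℝ (Fin d) :=
    fun tt w => (∑ j ∈ tt, Real.exp ⟪y j, w⟫)⁻¹ • ∑ j ∈ tt, Real.exp ⟪y j, w⟫ • y j with hGy
  set Gl : EuclideanSpace ℝ (Fin d) → EuclideanSpace ℝ (Fin d) := fun w =>
    (-(1 / (N₁:ℝ))) • (∑ i ∈ S, (x i - Gx (R i) w))
      - (lam2 / (N₁:ℝ)) • (∑ i ∈ S, (y i - Gy (R i) w))
      + (lam3 / 2) • ((2:ℝ) • w) with hGl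
  have hLgrad : ∀ w, HasGradientAt L (Gl w) w := by
    intro w
    have h1 : HasGradientAt
        (fun w => ∑ i ∈ S, (⟪x i, w⟫ - Real.log (∑ j ∈ R i, Real.exp ⟪x j, w⟫)))
        (∑ i ∈ S, (x i - Gx (R i) w)) w :=
      excel_hga_sum fun i _ =>
        excel_hga_sub (excel_hga_inner (x i) w) (excel_lse_hasGradientAt x (R i) (hRne i) w)
    have h2 : HasGradientAt
        (fun w => ∑ i ∈ S, (⟪y i, w⟫ - Real.log (∑ j ∈ R i, Real.exp ⟪y j, w⟫)))
        (∑ i ∈ S, (y i - Gy (R i) w)) w :=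
      excel_hga_sum fun i _ =>
        excel_hga_sub (excel_hga_inner (y i) w) (excel_lse_hasGradientAt y (R i) (hRne i) w)
    have h3 : HasGradientAt (fun w : EuclideanSpace ℝ (Fin d) => lam3 / 2 * ‖w‖ ^ 2)
        ((lam3 / 2) • ((2:ℝ) • w)) w :=
      excel_hga_const_mul (lam3 / 2) (excel_hga_norm_sq w)
    have htotal : HasGradientAt (fun w =>
        -(1 / (N₁ : ℝ)) * ∑ i ∈ S, (⟪x i, w⟫ - Real.log (∑ j ∈ R i, Real.exp ⟪x j, w⟫))
        - lam2 / (N₁ : ℝ) * ∑ i ∈ S, (⟪y i, w⟫ - Real.log (∑ j ∈ R i, Real.exp ⟪y j, w⟫))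
        + lam3 / 2 * ‖w‖ ^ 2) (Gl w) w := by
      rw [hGl]
      exact excel_hga_add
        (excel_hga_sub (excel_hga_const_mul (-(1 / (N₁:ℝ))) h1)
          (excel_hga_const_mul (lam2 / (N₁:ℝ)) h2)) h3
    refine htotal.congr_of_eventuallyEq (Filter.Eventually.of_forall fun w => ?_)
    rw [hL w]
    simp only [hinner]
  rw [(hLgrad u).gradient, (hLgrad v).gradient]
  have hdiff : Gl u - Gl v =
      (1 / (N₁:ℝ)) • (∑ i ∈ S, (Gx (R i) u - Gx (R i) v))
      + (lam2 / (N₁:ℝ)) • (∑ i ∈ S, (Gy (R i) u - Gy (R i) v))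
      + lam3 • (u - v) := by
    rw [hGl]
    simp only [Finset.sum_sub_distrib, smul_sub, smul_smul]
    module
  rw [hdiff]
  have hxlip : ∀ i ∈ S, ‖Gx (R i) u - Gx (R i) v‖ ≤ M^2 * ‖u - v‖ := fun i _ =>
    excel_lse_grad_lip x (R i) (hRne i) (fun j _ => hMub j) u v
  have hylip : ∀ i ∈ S, ‖Gy (R i) u - Gy (R i) v‖ ≤ M^2 * ‖u - v‖ := fun i _ =>
    excel_lse_grad_lip y (R i) (hRne i) (fun j _ => (hynorm j).trans (hMub j)) u v
  have hcardsum : ∀ (G : Fin N → EuclideanSpace ℝ (Fin d)),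
      (∀ i ∈ S, ‖G i‖ ≤ M^2 * ‖u - v‖) →
      ‖∑ i ∈ S, G i‖ ≤ (N₁:ℝ) * (M^2 * ‖u - v‖) := by
    intro G hG
    calc ‖∑ i ∈ S, G i‖ ≤ ∑ i ∈ S, ‖G i‖ := norm_sum_le _ _
      _ ≤ ∑ _i ∈ S, M^2 * ‖u - v‖ := Finset.sum_le_sum hG
      _ = (S.card : ℝ) * (M^2 * ‖u - v‖) := by rw [Finset.sum_const, nsmul_eq_mul]
      _ = (N₁ : ℝ) * (M^2 * ‖u - v‖) := by rw [hN₁]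
  have h1n := hcardsum _ hxlip
  have h2n := hcardsum _ hylip
  calc ‖(1 / (N₁:ℝ)) • (∑ i ∈ S, (Gx (R i) u - Gx (R i) v))
      + (lam2 / (N₁:ℝ)) • (∑ i ∈ S, (Gy (R i) u - Gy (R i) v))
      + lam3 • (u - v)‖
      ≤ ‖(1 / (N₁:ℝ)) • (∑ i ∈ S, (Gx (R i) u - Gx (R i) v))‖
        + ‖(lam2 / (N₁:ℝ)) • (∑ i ∈ S, (Gy (R i) u - Gy (R i) v))‖
        + ‖lam3 • (u - v)‖ := norm_add₃_le
    _ ≤ (1 / (N₁:ℝ)) * ((N₁:ℝ) * (M^2 * ‖u - v‖))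
        + (lam2 / (N₁:ℝ)) * ((N₁:ℝ) * (M^2 * ‖u - v‖))
        + lam3 * ‖u - v‖ := by
        have e1 : ‖(1 / (N₁:ℝ)) • (∑ i ∈ S, (Gx (R i) u - Gx (R i) v))‖
            = (1 / (N₁:ℝ)) * ‖∑ i ∈ S, (Gx (R i) u - Gx (R i) v)‖ := by
          rw [norm_smul, Real.norm_eq_abs, abs_of_pos (by positivity)]
        have e2 : ‖(lam2 / (N₁:ℝ)) • (∑ i ∈ S, (Gy (R i) u - Gy (R i) v))‖
            = (lam2 / (N₁:ℝ)) * ‖∑ i ∈ S, (Gy (R i) u - Gy (R i) v)‖ := by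
          rw [norm_smul, Real.norm_eq_abs, abs_of_pos (by positivity)]
        have e3 : ‖lam3 • (u - v)‖ = lam3 * ‖u - v‖ := by
          rw [norm_smul, Real.norm_eq_abs, abs_of_pos hlam3]
        rw [e1, e2, e3]
        gcongr <;> positivity
    _ = ((1 + lam2) * M ^ 2 + lam3) * ‖u - v‖ := by
        field_simp
end

section
/- Let ŵ ∈ ℝ^d be a global minimizer of the loss L, let C₁ ≥ 0 satisfy ∑_{i=1}^N ‖x_i‖₂ ≤ C₁, and assume ∇L is Lipschitz continuous with constant (1+λ₂)C₁ + λ₃. Then ‖ŵ − P_k ŵ‖₂² ≥ (1 / (((1+λ₂)C₁ + λ₃) · N₁)) · ŵᵀ (I_d − P_k) ∑_{i∈S} ( x_i − m_i(P_k ŵ) ), where I_d is the d×d identity matrix. (Theorem 2 of the paper.) -/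
open scoped RealInnerProductSpace BigOperators

set_option maxHeartbeats 1000000 in
/-- Theorem 2 of the paper: lower generalization error bound. -/
theorem excel_theorem_2
    (N d k : ℕ) (hN : 0 < N) (hd : 0 < d) (hk : 0 < k) (hkd : k ≤ d)
    (x : Fin N → EuclideanSpace ℝ (Fin d))
    (E : Fin N → ℕ) (hE : ∀ i, E i = 0 ∨ E i = 1)
    (T : Fin N → ℝ)
    (S : Finset (Fin N)) (hS : S = Finset.univ.filter fun i => E i = 1)
    (hSne : S.Nonempty)
    (N₁ : ℕ) (hN₁ : N₁ = S.card)
    (R : Fin N → Finset (Fin N))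
    (hR : ∀ i, R i = Finset.univ.filter fun j => T i ≤ T j)
    (K : Finset (Fin d)) (hK : K.card = k)
    (P : EuclideanSpace ℝ (Fin d) → EuclideanSpace ℝ (Fin d))
    (hP : ∀ w (a : Fin d), P w a = if a ∈ K then w a else 0)
    (lam2 lam3 : ℝ) (hlam2 : 0 < lam2) (hlam3 : 0 < lam3)
    (L : EuclideanSpace ℝ (Fin d) → ℝ)
    (hL : ∀ w, L w =
      -(1 / (N₁ : ℝ)) * ∑ i ∈ S, (⟪x i, w⟫ - Real.log (∑ j ∈ R i, Real.exp ⟪x j, w⟫))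
      - lam2 / (N₁ : ℝ) * ∑ i ∈ S, (⟪x i, P w⟫ - Real.log (∑ j ∈ R i, Real.exp ⟪x j, P w⟫))
      + lam3 / 2 * ‖w‖ ^ 2)
    (m : EuclideanSpace ℝ (Fin d) → Fin N → EuclideanSpace ℝ (Fin d))
    (hm : ∀ u i, m u i =
      (∑ j ∈ R i, Real.exp ⟪x j, u⟫)⁻¹ • ∑ j ∈ R i, Real.exp ⟪x j, u⟫ • x j)
    (wh : EuclideanSpace ℝ (Fin d)) (hwh : ∀ w, L wh ≤ L w)
    (C₁ : ℝ) (hC₁ : 0 ≤ C₁) (hxC₁ : ∑ i : Fin N, ‖x i‖ ≤ C₁)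
    (hLip : ∀ u v : EuclideanSpace ℝ (Fin d),
      ‖gradient L u - gradient L v‖ ≤ ((1 + lam2) * C₁ + lam3) * ‖u - v‖) :
    ‖wh - P wh‖ ^ 2 ≥ 1 / (((1 + lam2) * C₁ + lam3) * (N₁ : ℝ)) *
      ⟪wh, (∑ i ∈ S, (x i - m (P wh) i)) - P (∑ i ∈ S, (x i - m (P wh) i))⟫ := by
  classical
  set L₀ : ℝ := (1 + lam2) * C₁ + lam3 with hL₀
  have hL₀pos : 0 < L₀ := by positivity
  have hN₁pos : (0 : ℝ) < (N₁ : ℝ) := by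
    have := hSne.card_pos; rw [hN₁]; exact_mod_cast this
  -- the projection as a continuous linear map
  set Pl : EuclideanSpace ℝ (Fin d) →L[ℝ] EuclideanSpace ℝ (Fin d) :=
    LinearMap.toContinuousLinearMap
      { toFun := P
        map_add' := by
          intro a b; ext i
          simp only [hP, PiLp.add_apply]; split <;> simp
        map_smul' := by
          intro c a; ext i
          simp only [hP, PiLp.smul_apply, smul_eq_mul, RingHom.id_apply]
          split <;> simp } with hPldef
  have hPlP : ∀ w, Pl w = P w := fun w => rfl
  have hidem : ∀ w, P (P w) = P w := by
    intro w; ext a; by_cases h : a ∈ K <;> simp [hP, h]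
  have hadj : ∀ a b : EuclideanSpace ℝ (Fin d), ⟪P a, b⟫ = ⟪a, P b⟫ := by
    intro a b
    simp only [PiLp.inner_apply, RCLike.inner_apply, conj_trivial, hP]
    refine Finset.sum_congr rfl fun i _ => ?_
    by_cases h : i ∈ K <;> simp [h]
  -- positivity of the softmax denominators
  have hfpos : ∀ i (u : EuclideanSpace ℝ (Fin d)), 0 < ∑ j ∈ R i, Real.exp ⟪x j, u⟫ := by
    intro i u
    refine Finset.sum_pos (fun j _ => Real.exp_pos _) ⟨i, ?_⟩
    simp [hR]
  -- the derivative of the partial-likelihood part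
  have hAd : ∀ u : EuclideanSpace ℝ (Fin d), HasFDerivAt
      (fun w : EuclideanSpace ℝ (Fin d) =>
        ∑ i ∈ S, (⟪x i, w⟫ - Real.log (∑ j ∈ R i, Real.exp ⟪x j, w⟫)))
      (∑ i ∈ S, ((innerSL ℝ (x i)) -
        (∑ j ∈ R i, Real.exp ⟪x j, u⟫)⁻¹ • ∑ j ∈ R i, Real.exp ⟪x j, u⟫ • (innerSL ℝ (x j)))) u := by
    intro u
    refine HasFDerivAt.fun_sum fun i _ => HasFDerivAt.sub ((innerSL ℝ (x i)).hasFDerivAt) ?_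
    exact (Real.hasDerivAt_log (hfpos i u).ne').comp_hasFDerivAt u
      (HasFDerivAt.fun_sum fun j _ =>
        (Real.hasDerivAt_exp ⟪x j, u⟫).comp_hasFDerivAt u ((innerSL ℝ (x j)).hasFDerivAt))
  -- what that derivative does to a vector
  have hDAapp : ∀ (u h : EuclideanSpace ℝ (Fin d)),
      (∑ i ∈ S, ((innerSL ℝ (x i)) -
        (∑ j ∈ R i, Real.exp ⟪x j, u⟫)⁻¹ • ∑ j ∈ R i, Real.exp ⟪x j, u⟫ • (innerSL ℝ (x j)))) h
      = ⟪∑ i ∈ S, (x i - m u i), h⟫ := by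
    intro u h
    rw [sum_inner (𝕜 := ℝ)]
    simp only [ContinuousLinearMap.coe_sum', Finset.sum_apply, ContinuousLinearMap.coe_sub',
      Pi.sub_apply, ContinuousLinearMap.coe_smul', Pi.smul_apply, innerSL_apply_apply,
      inner_sub_left, smul_eq_mul]
    refine Finset.sum_congr rfl fun i _ => ?_
    congr 1
    rw [hm, real_inner_smul_left, sum_inner (𝕜 := ℝ)]
    congr 1
    refine Finset.sum_congr rfl fun j _ => ?_
    rw [real_inner_smul_left]
  -- gradient of L at any point
  set v : EuclideanSpace ℝ (Fin d) → EuclideanSpace ℝ (Fin d) :=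
    fun u => ∑ i ∈ S, (x i - m u i) with hv
  set G : EuclideanSpace ℝ (Fin d) → EuclideanSpace ℝ (Fin d) := fun u =>
    (-(1 / (N₁ : ℝ))) • v u + ((-(lam2 / (N₁ : ℝ))) • Pl (v (Pl u)) + lam3 • u) with hG
  have hgrad : ∀ u : EuclideanSpace ℝ (Fin d), HasGradientAt L (G u) u := by
    intro u
    rw [hasGradientAt_iff_hasFDerivAt]
    have hB : HasFDerivAt
        (fun w : EuclideanSpace ℝ (Fin d) =>
          ∑ i ∈ S, (⟪x i, P w⟫ - Real.log (∑ j ∈ R i, Real.exp ⟪x j, P w⟫)))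
        ((∑ i ∈ S, ((innerSL ℝ (x i)) -
          (∑ j ∈ R i, Real.exp ⟪x j, Pl u⟫)⁻¹ •
            ∑ j ∈ R i, Real.exp ⟪x j, Pl u⟫ • (innerSL ℝ (x j)))).comp Pl) u := by
      have := ((hAd (Pl u)).comp u (Pl.hasFDerivAt))
      exact this
    have hNorm : HasFDerivAt (fun w : EuclideanSpace ℝ (Fin d) => lam3 / 2 * ⟪w, w⟫)
        ((lam3 / 2) • ((fderivInnerCLM ℝ (u, u)).comp
          ((ContinuousLinearMap.id ℝ _).prod (ContinuousLinearMap.id ℝ _)))) u :=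
      ((hasFDerivAt_id u).inner ℝ (hasFDerivAt_id u)).const_mul (lam3 / 2)
    have htot := (((hAd u).const_mul (-(1 / (N₁ : ℝ)))).add
      ((hB.const_mul (-(lam2 / (N₁ : ℝ)))).add hNorm))
    have hfun : L = fun w : EuclideanSpace ℝ (Fin d) =>
        (-(1 / (N₁ : ℝ))) * (∑ i ∈ S, (⟪x i, w⟫ - Real.log (∑ j ∈ R i, Real.exp ⟪x j, w⟫)))
        + ((-(lam2 / (N₁ : ℝ))) * (∑ i ∈ S, (⟪x i, P w⟫ - Real.log (∑ j ∈ R i, Real.exp ⟪x j, P w⟫)))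
          + lam3 / 2 * ⟪w, w⟫) := by
      funext w
      rw [hL w, real_inner_self_eq_norm_sq]
      ring
    rw [hfun]
    refine htot.congr_fderiv (Eq.symm ?_)
    ext z
    simp only [ContinuousLinearMap.add_apply, ContinuousLinearMap.coe_smul', Pi.smul_apply,
      ContinuousLinearMap.coe_comp', Function.comp_apply, smul_eq_mul,
      InnerProductSpace.toDual_apply_apply, fderivInnerCLM_apply, ContinuousLinearMap.prod_apply,
      ContinuousLinearMap.coe_id', id_eq]
    rw [hG]
    simp only [inner_add_left, real_inner_smul_left]
    rw [hDAapp u z, hDAapp (Pl u) (Pl z)]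
    have e1 : ⟪Pl (v (Pl u)), z⟫ = ⟪v (Pl u), Pl z⟫ := by
      rw [hPlP (v (Pl u)), hPlP z, hadj]
    have e2 : (∑ i ∈ S, (x i - m u i)) = v u := rfl
    have e3 : (∑ i ∈ S, (x i - m (Pl u) i)) = v (Pl u) := rfl
    have e4 : ⟪z, (u : EuclideanSpace ℝ (Fin d))⟫ = ⟪u, z⟫ := real_inner_comm _ _
    rw [e1, e2, e3, e4]
    ring
  -- gradient vanishes at the minimizer
  have hmin : IsLocalMin L wh := Filter.Eventually.of_forall hwh
  have hDwh := (hgrad wh).hasFDerivAt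
  have h0 : (InnerProductSpace.toDual ℝ (EuclideanSpace ℝ (Fin d))) (G wh) = 0 :=
    hmin.hasFDerivAt_eq_zero hDwh
  have hGwh : G wh = 0 := by
    have := congrArg (InnerProductSpace.toDual ℝ (EuclideanSpace ℝ (Fin d))).symm h0
    simpa using this
  have hgradwh : gradient L wh = 0 := by rw [(hgrad wh).gradient, hGwh]
  have hgradP : gradient L (P wh) = G (P wh) := (hgrad (P wh)).gradient
  -- Lipschitz bound
  have hlip := hLip wh (P wh)
  rw [hgradwh, hgradP, zero_sub, norm_neg] at hlip
  -- orthogonality facts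
  have hPh : P (wh - P wh) = 0 := by
    rw [← hPlP, map_sub, hPlP, hPlP, hidem, sub_self]
  have hPlPwh : Pl (P wh) = P wh := by rw [hPlP, hidem]
  have hGPwh : G (P wh) =
      (-(1 / (N₁ : ℝ))) • v (P wh) + ((-(lam2 / (N₁ : ℝ))) • Pl (v (P wh)) + lam3 • P wh) := by
    rw [hG]; simp only [hPlPwh]
  have hz1 : ⟪wh - P wh, Pl (v (P wh))⟫ = 0 := by
    rw [hPlP, ← hadj, hPh, inner_zero_left]
  have hz2 : ⟪wh - P wh, P wh⟫ = 0 := by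
    rw [← hadj, hPh, inner_zero_left]
  have hinner : ⟪wh - P wh, G (P wh)⟫ = -(1 / (N₁ : ℝ)) * ⟪wh - P wh, v (P wh)⟫ := by
    rw [hGPwh, inner_add_right, inner_add_right, real_inner_smul_right, real_inner_smul_right,
      real_inner_smul_right, hz1, hz2]
    ring
  -- Cauchy–Schwarz step
  have hcs : -(L₀ * ‖wh - P wh‖ ^ 2) ≤ ⟪wh - P wh, G (P wh)⟫ := by
    have h1 := abs_real_inner_le_norm (wh - P wh) (G (P wh))
    have h2 : ‖wh - P wh‖ * ‖G (P wh)‖ ≤ ‖wh - P wh‖ * (L₀ * ‖wh - P wh‖) :=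
      mul_le_mul_of_nonneg_left hlip (norm_nonneg _)
    have h3 := neg_abs_le (⟪wh - P wh, G (P wh)⟫)
    have h4 : ‖wh - P wh‖ * (L₀ * ‖wh - P wh‖) = L₀ * ‖wh - P wh‖ ^ 2 := by ring
    linarith
  -- rewrite the target inner product
  have hVP : ⟪wh, v (P wh) - P (v (P wh))⟫ = ⟪wh - P wh, v (P wh)⟫ := by
    rw [inner_sub_right, inner_sub_left, ← hadj]
  have hfinal : -(L₀ * ‖wh - P wh‖ ^ 2) ≤ -(1 / (N₁ : ℝ)) * ⟪wh - P wh, v (P wh)⟫ := by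
    rw [← hinner]; exact hcs
  have hstep : (1 / (N₁ : ℝ)) * ⟪wh - P wh, v (P wh)⟫ ≤ L₀ * ‖wh - P wh‖ ^ 2 := by linarith
  have hgoal : 1 / (L₀ * (N₁ : ℝ)) * ⟪wh - P wh, v (P wh)⟫ ≤ ‖wh - P wh‖ ^ 2 := by
    have hc : (0 : ℝ) ≤ 1 / L₀ := by positivity
    calc 1 / (L₀ * (N₁ : ℝ)) * ⟪wh - P wh, v (P wh)⟫
        = (1 / L₀) * ((1 / (N₁ : ℝ)) * ⟪wh - P wh, v (P wh)⟫) := by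
          field_simp
      _ ≤ (1 / L₀) * (L₀ * ‖wh - P wh‖ ^ 2) := mul_le_mul_of_nonneg_left hstep hc
      _ = ‖wh - P wh‖ ^ 2 := by field_simp
  have hVeq : (∑ i ∈ S, (x i - m (P wh) i)) = v (P wh) := rfl
  rw [ge_iff_le, hVeq, hVP]
  exact hgoal
end

section
/- Suppose the loss L is μ-strongly convex with μ = max{λ₂, λ₃}, and let ŵ ∈ ℝ^d be a global minimizer of L with ‖ŵ‖₂ ≤ C₀, where C₀ ≥ 0. Let C₁ ≥ 0 satisfy ∑_{i=1}^N ‖x_i‖₂ ≤ C₁. Then ‖ŵ − P_k ŵ‖₂² ≤ 4 C₀ C₁ √(d − k) / max{λ₂, λ₃}. (Corollary 1 of the paper.) -/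
open scoped RealInnerProductSpace BigOperators

/-- Corollary 1 of the paper. -/
theorem excel_corollary_1
    (N d k : ℕ) (hN : 0 < N) (hd : 0 < d) (hk : 0 < k) (hkd : k ≤ d)
    (x : Fin N → EuclideanSpace ℝ (Fin d))
    (E : Fin N → ℕ) (hE : ∀ i, E i = 0 ∨ E i = 1)
    (T : Fin N → ℝ)
    (S : Finset (Fin N)) (hS : S = Finset.univ.filter fun i => E i = 1)
    (hSne : S.Nonempty)
    (N₁ : ℕ) (hN₁ : N₁ = S.card)
    (R : Fin N → Finset (Fin N))
    (hR : ∀ i, R i = Finset.univ.filter fun j => T i ≤ T j)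
    (K : Finset (Fin d)) (hK : K.card = k)
    (P : EuclideanSpace ℝ (Fin d) → EuclideanSpace ℝ (Fin d))
    (hP : ∀ w (a : Fin d), P w a = if a ∈ K then w a else 0)
    (lam2 lam3 : ℝ) (hlam2 : 0 < lam2) (hlam3 : 0 < lam3)
    (L : EuclideanSpace ℝ (Fin d) → ℝ)
    (hL : ∀ w, L w =
      -(1 / (N₁ : ℝ)) * ∑ i ∈ S, (⟪x i, w⟫ - Real.log (∑ j ∈ R i, Real.exp ⟪x j, w⟫))
      - lam2 / (N₁ : ℝ) * ∑ i ∈ S, (⟪x i, P w⟫ - Real.log (∑ j ∈ R i, Real.exp ⟪x j, P w⟫))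
      + lam3 / 2 * ‖w‖ ^ 2)
    (hstrong : ConvexOn ℝ Set.univ fun w => L w - max lam2 lam3 / 2 * ‖w‖ ^ 2)
    (wh : EuclideanSpace ℝ (Fin d)) (hwh : ∀ w, L wh ≤ L w)
    (C₀ : ℝ) (hC₀ : 0 ≤ C₀) (hwhC₀ : ‖wh‖ ≤ C₀)
    (C₁ : ℝ) (hC₁ : 0 ≤ C₁) (hxC₁ : ∑ i : Fin N, ‖x i‖ ≤ C₁) :
    ‖wh - P wh‖ ^ 2 ≤ 4 * C₀ * C₁ * Real.sqrt ((d : ℝ) - (k : ℝ)) / max lam2 lam3 := by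
  have hμ : (0:ℝ) < max lam2 lam3 := lt_max_iff.2 (Or.inl hlam2)
  -- trivial case k = d
  rcases eq_or_lt_of_le hkd with hkd' | hkd'
  · have hKuniv : K = Finset.univ := by
      apply Finset.eq_univ_of_card
      simp [hK, hkd']
    have hPwh : P wh = wh := by
      ext a
      rw [hP wh a, hKuniv]
      simp
    rw [hPwh]
    simp only [sub_self, norm_zero]
    rw [zero_pow (two_ne_zero)]
    positivity
  -- main case k < d
  have hsqrt1 : (1:ℝ) ≤ Real.sqrt ((d : ℝ) - (k : ℝ)) := by
    rw [show (1:ℝ) = Real.sqrt 1 by simp]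
    apply Real.sqrt_le_sqrt
    have : (k:ℝ) + 1 ≤ (d:ℝ) := by exact_mod_cast hkd'
    linarith
  have hN₁pos : (0:ℝ) < (N₁ : ℝ) := by
    rw [hN₁]
    exact_mod_cast Finset.card_pos.2 hSne
  -- basic facts about P
  have hva : ∀ a, P wh a = if a ∈ K then wh a else 0 := hP wh
  have hPv : P (P wh) = P wh := by
    ext a
    rw [hP (P wh) a, hva a]
    by_cases h : a ∈ K <;> simp [h]
  -- norm comparisons
  have hnorm_le : ∀ (w w' : EuclideanSpace ℝ (Fin d)), (∀ a, ‖w a‖ ≤ ‖w' a‖) → ‖w‖ ≤ ‖w'‖ := by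
    intro w w' h
    rw [EuclideanSpace.norm_eq, EuclideanSpace.norm_eq]
    apply Real.sqrt_le_sqrt
    apply Finset.sum_le_sum
    intro a _
    exact pow_le_pow_left₀ (norm_nonneg _) (h a) 2
  have hvu : ‖P wh‖ ≤ ‖wh‖ := by
    apply hnorm_le
    intro a
    rw [hva a]
    by_cases h : a ∈ K <;> simp [h]
  have huvu : ‖wh - P wh‖ ≤ ‖wh‖ := by
    apply hnorm_le
    intro a
    have : (wh - P wh) a = wh a - P wh a := rfl
    rw [this, hva a]
    by_cases h : a ∈ K <;> simp [h]
  have huvC₀ : ‖wh - P wh‖ ≤ C₀ := le_trans huvu hwhC₀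
  have hxC : ∀ i, ‖x i‖ ≤ C₁ := fun i =>
    le_trans (Finset.single_le_sum (f := fun j => ‖x j‖) (fun j _ => norm_nonneg _)
      (Finset.mem_univ i)) hxC₁
  -- inner product Lipschitz bound
  have hinner : ∀ (i : Fin N) (w w' : EuclideanSpace ℝ (Fin d)),
      ⟪x i, w⟫ - ⟪x i, w'⟫ ≤ C₁ * ‖w - w'‖ := by
    intro i w w'
    have h1 : ⟪x i, w⟫ - ⟪x i, w'⟫ = ⟪x i, w - w'⟫ := (inner_sub_right _ _ _).symm
    rw [h1]
    calc ⟪x i, w - w'⟫ ≤ ‖x i‖ * ‖w - w'‖ := real_inner_le_norm _ _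
      _ ≤ C₁ * ‖w - w'‖ := mul_le_mul_of_nonneg_right (hxC i) (norm_nonneg _)
  -- log-sum-exp Lipschitz bound
  have hLSE : ∀ i : Fin N,
      Real.log (∑ j ∈ R i, Real.exp ⟪x j, P wh⟫)
        - Real.log (∑ j ∈ R i, Real.exp ⟪x j, wh⟫) ≤ C₁ * ‖wh - P wh‖ := by
    intro i
    have hiR : i ∈ R i := by rw [hR i]; simp
    have hpos : ∀ w : EuclideanSpace ℝ (Fin d), 0 < ∑ j ∈ R i, Real.exp ⟪x j, w⟫ :=
      fun w => Finset.sum_pos (fun j _ => Real.exp_pos _) ⟨i, hiR⟩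
    have hle : (∑ j ∈ R i, Real.exp ⟪x j, P wh⟫)
        ≤ (∑ j ∈ R i, Real.exp ⟪x j, wh⟫) * Real.exp (C₁ * ‖wh - P wh‖) := by
      rw [Finset.sum_mul]
      apply Finset.sum_le_sum
      intro j _
      rw [← Real.exp_add]
      apply Real.exp_le_exp.2
      have h2 := hinner j (P wh) wh
      rw [norm_sub_rev (P wh) wh] at h2
      linarith
    have h3 : Real.log (∑ j ∈ R i, Real.exp ⟪x j, P wh⟫)
        ≤ Real.log ((∑ j ∈ R i, Real.exp ⟪x j, wh⟫) * Real.exp (C₁ * ‖wh - P wh‖)) := by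
      apply Real.log_le_log (hpos _) hle
    rw [Real.log_mul (ne_of_gt (hpos _)) (Real.exp_ne_zero _), Real.log_exp] at h3
    linarith
  -- sum bound
  have hA : (∑ i ∈ S, (⟪x i, wh⟫ - Real.log (∑ j ∈ R i, Real.exp ⟪x j, wh⟫)))
      - (∑ i ∈ S, (⟪x i, P wh⟫ - Real.log (∑ j ∈ R i, Real.exp ⟪x j, P wh⟫)))
      ≤ (N₁ : ℝ) * (2 * C₁ * ‖wh - P wh‖) := by
    rw [← Finset.sum_sub_distrib]
    calc (∑ i ∈ S, ((⟪x i, wh⟫ - Real.log (∑ j ∈ R i, Real.exp ⟪x j, wh⟫))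
          - (⟪x i, P wh⟫ - Real.log (∑ j ∈ R i, Real.exp ⟪x j, P wh⟫))))
        ≤ ∑ _i ∈ S, (2 * C₁ * ‖wh - P wh‖) := by
          apply Finset.sum_le_sum
          intro i _
          have h1 := hinner i wh (P wh)
          have h2 := hLSE i
          linarith
      _ = (N₁ : ℝ) * (2 * C₁ * ‖wh - P wh‖) := by
          rw [Finset.sum_const, nsmul_eq_mul, hN₁]
  -- loss difference bound
  have hLdiff : L (P wh) - L wh ≤ 2 * C₁ * C₀ := by
    have h1 := hL wh
    have h2 := hL (P wh)
    rw [hPv] at h2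
    have hAdiv : (1 / (N₁ : ℝ)) *
        ((∑ i ∈ S, (⟪x i, wh⟫ - Real.log (∑ j ∈ R i, Real.exp ⟪x j, wh⟫)))
        - (∑ i ∈ S, (⟪x i, P wh⟫ - Real.log (∑ j ∈ R i, Real.exp ⟪x j, P wh⟫))))
        ≤ 2 * C₁ * ‖wh - P wh‖ := by
      have := mul_le_mul_of_nonneg_left hA (le_of_lt (one_div_pos.2 hN₁pos))
      calc (1 / (N₁ : ℝ)) * _ ≤ (1 / (N₁ : ℝ)) * ((N₁ : ℝ) * (2 * C₁ * ‖wh - P wh‖)) := this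
        _ = 2 * C₁ * ‖wh - P wh‖ := by field_simp
    have hp2 : ‖P wh‖ ^ 2 ≤ ‖wh‖ ^ 2 := pow_le_pow_left₀ (norm_nonneg _) hvu 2
    have hc : 2 * C₁ * ‖wh - P wh‖ ≤ 2 * C₁ * C₀ :=
      mul_le_mul_of_nonneg_left huvC₀ (by positivity)
    nlinarith [mul_nonneg (le_of_lt hlam3) (sub_nonneg.2 hp2)]
  -- strong convexity: quadratic growth at the minimizer
  have hkey : max lam2 lam3 / 2 * ‖wh - P wh‖ ^ 2 ≤ L (P wh) - L wh := by
    have hB0 : 0 ≤ L (P wh) - L wh := sub_nonneg.2 (hwh _)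
    by_contra hcon
    push_neg at hcon
    have hc0 : 0 < max lam2 lam3 / 2 * ‖wh - P wh‖ ^ 2 := lt_of_le_of_lt hB0 hcon
    have hstep : ∀ t : ℝ, 0 < t → t < 1 →
        (1 - t) * (max lam2 lam3 / 2 * ‖wh - P wh‖ ^ 2) ≤ L (P wh) - L wh := by
      intro t ht0 ht1
      have ha0 : (0:ℝ) ≤ 1 - t := by linarith
      have hconv := hstrong.2 (Set.mem_univ wh) (Set.mem_univ (P wh)) ha0 (le_of_lt ht0)
        (by ring : (1 - t) + t = 1)
      simp only [smul_eq_mul] at hconv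
      have hmin := hwh ((1 - t) • wh + t • P wh)
      have h1 : ‖(1 - t) • wh + t • P wh‖ ^ 2
          = ((1 - t) * ‖wh‖) ^ 2 + 2 * ((1 - t) * (t * ⟪wh, P wh⟫)) + (t * ‖P wh‖) ^ 2 := by
        rw [norm_add_sq_real, norm_smul, norm_smul, real_inner_smul_left, real_inner_smul_right,
          Real.norm_eq_abs, Real.norm_eq_abs, abs_of_nonneg ha0, abs_of_nonneg (le_of_lt ht0)]
      have h2 : ‖wh - P wh‖ ^ 2 = ‖wh‖ ^ 2 - 2 * ⟪wh, P wh⟫ + ‖P wh‖ ^ 2 :=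
        norm_sub_sq_real wh (P wh)
      have hq : max lam2 lam3 / 2 * ‖(1 - t) • wh + t • P wh‖ ^ 2
          = (1 - t) * (max lam2 lam3 / 2 * ‖wh‖ ^ 2) + t * (max lam2 lam3 / 2 * ‖P wh‖ ^ 2)
            - max lam2 lam3 / 2 * ((1 - t) * t) * ‖wh - P wh‖ ^ 2 := by
        linear_combination (max lam2 lam3 / 2) * h1 + (max lam2 lam3 / 2 * (1 - t) * t) * h2
      have hmin' : t * L wh ≤ t * L ((1 - t) • wh + t • P wh) :=
        mul_le_mul_of_nonneg_left hmin (le_of_lt ht0)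
      have h3 : t * ((1 - t) * (max lam2 lam3 / 2 * ‖wh - P wh‖ ^ 2))
          ≤ t * (L (P wh) - L wh) := by
        linarith [hconv, hq, hmin']
      exact le_of_mul_le_mul_left h3 ht0
    set c := max lam2 lam3 / 2 * ‖wh - P wh‖ ^ 2 with hcdef
    set B := L (P wh) - L wh with hBdef
    have ht := hstep ((c - B) / (2 * c)) (div_pos (by linarith) (by linarith))
      (by rw [div_lt_one (by linarith)]; linarith)
    have : (1 - (c - B) / (2 * c)) * c = (c + B) / 2 := by field_simp; ring
    rw [this] at ht
    linarith
  -- conclude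
  have hfin : ‖wh - P wh‖ ^ 2 ≤ 4 * C₀ * C₁ / max lam2 lam3 := by
    rw [le_div_iff₀ hμ]
    nlinarith [hkey, hLdiff]
  calc ‖wh - P wh‖ ^ 2 ≤ 4 * C₀ * C₁ / max lam2 lam3 := hfin
    _ ≤ 4 * C₀ * C₁ * Real.sqrt ((d : ℝ) - (k : ℝ)) / max lam2 lam3 := by
      exact (div_le_div_iff_of_pos_right hμ).mpr (le_mul_of_one_le_right (by positivity) hsqrt1)
end

section
/- Let ŵ ∈ ℝ^d satisfy ∇L(ŵ) = 0 (in particular, this holds if ŵ is a global minimizer of L). Then ∇L(P_k ŵ) = −(1/N₁) ∑_{i∈S} ( x_i − m_i(P_k ŵ) ) + (1/N₁) ∑_{i∈S} P_k ( x_i − m_i(ŵ) ). (Identity (L) in the proof of Theorem 1: the λ₂-terms and λ₃-terms in ∇L(P_k ŵ) − P_k ∇L(ŵ) cancel exactly.) -/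
open scoped RealInnerProductSpace BigOperators

/-- Identity (L) in the proof of Theorem 1. -/
theorem excel_gradient_identity
    (N d k : ℕ) (hN : 0 < N) (hd : 0 < d) (hk : 0 < k) (hkd : k ≤ d)
    (x : Fin N → EuclideanSpace ℝ (Fin d))
    (E : Fin N → ℕ) (hE : ∀ i, E i = 0 ∨ E i = 1)
    (T : Fin N → ℝ)
    (S : Finset (Fin N)) (hS : S = Finset.univ.filter fun i => E i = 1)
    (hSne : S.Nonempty)
    (N₁ : ℕ) (hN₁ : N₁ = S.card)
    (R : Fin N → Finset (Fin N))
    (hR : ∀ i, R i = Finset.univ.filter fun j => T i ≤ T j)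
    (K : Finset (Fin d)) (hK : K.card = k)
    (P : EuclideanSpace ℝ (Fin d) → EuclideanSpace ℝ (Fin d))
    (hP : ∀ w (a : Fin d), P w a = if a ∈ K then w a else 0)
    (lam2 lam3 : ℝ) (hlam2 : 0 < lam2) (hlam3 : 0 < lam3)
    (L : EuclideanSpace ℝ (Fin d) → ℝ)
    (hL : ∀ w, L w =
      -(1 / (N₁ : ℝ)) * ∑ i ∈ S, (⟪x i, w⟫ - Real.log (∑ j ∈ R i, Real.exp ⟪x j, w⟫))
      - lam2 / (N₁ : ℝ) * ∑ i ∈ S, (⟪x i, P w⟫ - Real.log (∑ j ∈ R i, Real.exp ⟪x j, P w⟫))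
      + lam3 / 2 * ‖w‖ ^ 2)
    (m : EuclideanSpace ℝ (Fin d) → Fin N → EuclideanSpace ℝ (Fin d))
    (hm : ∀ u i, m u i =
      (∑ j ∈ R i, Real.exp ⟪x j, u⟫)⁻¹ • ∑ j ∈ R i, Real.exp ⟪x j, u⟫ • x j)
    (wh : EuclideanSpace ℝ (Fin d)) (hgrad : gradient L wh = 0) :
    gradient L (P wh) =
      -((1 / (N₁ : ℝ)) • ∑ i ∈ S, (x i - m (P wh) i))
        + (1 / (N₁ : ℝ)) • ∑ i ∈ S, P (x i - m wh i) := by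
  classical
  have hRi : ∀ i : Fin N, i ∈ R i := fun i => by simp [hR i]
  have hsum_pos : ∀ (u : EuclideanSpace ℝ (Fin d)) (i : Fin N),
      0 < ∑ j ∈ R i, Real.exp ⟪x j, u⟫ := fun u i =>
    Finset.sum_pos (fun j _ => Real.exp_pos _) ⟨i, hRi i⟩
  -- P is linear
  have hPadd : ∀ u v, P (u + v) = P u + P v := by
    intro u v
    ext a
    simp only [hP, PiLp.add_apply]
    split_ifs <;> simp
  have hPsmul : ∀ (c : ℝ) u, P (c • u) = c • P u := by
    intro c u
    ext a
    simp only [hP, PiLp.smul_apply, smul_eq_mul]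
    split_ifs <;> simp
  have hPP : ∀ u, P (P u) = P u := by
    intro u
    ext a
    simp only [hP]
    split_ifs with h <;> simp [h]
  have hP0 : P (0 : EuclideanSpace ℝ (Fin d)) = 0 := by
    ext a
    simp [hP]
  set Pl : EuclideanSpace ℝ (Fin d) →ₗ[ℝ] EuclideanSpace ℝ (Fin d) :=
    { toFun := P, map_add' := hPadd, map_smul' := hPsmul } with hPl
  set Pc : EuclideanSpace ℝ (Fin d) →L[ℝ] EuclideanSpace ℝ (Fin d) :=
    LinearMap.toContinuousLinearMap Pl with hPcdef
  have hPc : ∀ u, Pc u = P u := fun u => rfl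
  have hPsum : ∀ (f : Fin N → EuclideanSpace ℝ (Fin d)) (s : Finset (Fin N)),
      P (∑ i ∈ s, f i) = ∑ i ∈ s, P (f i) := fun f s => map_sum Pl f s
  have hadj : ∀ c v : EuclideanSpace ℝ (Fin d), ⟪c, P v⟫ = ⟪P c, v⟫ := by
    intro c v
    simp only [PiLp.inner_apply, RCLike.inner_apply, starRingEnd_apply, star_trivial, hP]
    refine Finset.sum_congr rfl fun a _ => ?_
    split_ifs <;> ring
  set Sg : EuclideanSpace ℝ (Fin d) → EuclideanSpace ℝ (Fin d) :=
    fun u => ∑ i ∈ S, (x i - m u i) with hSg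
  have hSg' : ∀ u, Sg u = ∑ i ∈ S, (x i - m u i) := fun _ => rfl
  -- derivative of the common smooth part
  have hΦ : ∀ u : EuclideanSpace ℝ (Fin d), HasFDerivAt
      (fun v : EuclideanSpace ℝ (Fin d) =>
        ∑ i ∈ S, (⟪x i, v⟫ - Real.log (∑ j ∈ R i, Real.exp ⟪x j, v⟫)))
      (innerSL ℝ (Sg u)) u := by
    intro u
    have hterm : ∀ i ∈ S, HasFDerivAt
        (fun v : EuclideanSpace ℝ (Fin d) =>
          ⟪x i, v⟫ - Real.log (∑ j ∈ R i, Real.exp ⟪x j, v⟫))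
        (innerSL ℝ (x i - m u i)) u := by
      intro i _
      have h1 : HasFDerivAt (fun v : EuclideanSpace ℝ (Fin d) => ⟪x i, v⟫)
          (innerSL ℝ (x i)) u := (innerSL ℝ (x i)).hasFDerivAt
      have hs : HasFDerivAt
          (fun v : EuclideanSpace ℝ (Fin d) => ∑ j ∈ R i, Real.exp ⟪x j, v⟫)
          (∑ j ∈ R i, Real.exp ⟪x j, u⟫ • innerSL ℝ (x j)) u :=
        HasFDerivAt.fun_sum fun j _ => (innerSL ℝ (x j)).hasFDerivAt.exp
      have hlog := hs.log (ne_of_gt (hsum_pos u i))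
      have h2 := h1.fun_sub hlog
      refine h2.congr_fderiv ?_
      ext v
      simp only [hm, ContinuousLinearMap.sub_apply, ContinuousLinearMap.smul_apply,
        ContinuousLinearMap.coe_sum', Finset.sum_apply, innerSL_apply_apply,
        inner_sub_left, inner_smul_left, sum_inner, starRingEnd_apply, star_trivial,
        smul_eq_mul]
    have htotal := HasFDerivAt.fun_sum hterm
    refine htotal.congr_fderiv ?_
    ext v
    simp [hSg', sum_inner]
  set G : EuclideanSpace ℝ (Fin d) → EuclideanSpace ℝ (Fin d) := fun u =>
    (-(1 / (N₁ : ℝ))) • Sg u + (-(lam2 / (N₁ : ℝ))) • P (Sg (P u)) + lam3 • u with hG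
  have hG' : ∀ u, G u =
      (-(1 / (N₁ : ℝ))) • Sg u + (-(lam2 / (N₁ : ℝ))) • P (Sg (P u)) + lam3 • u :=
    fun _ => rfl
  have hLgrad : ∀ u, HasGradientAt L (G u) u := by
    intro u
    rw [hasGradientAt_iff_hasFDerivAt]
    have t1 := (hΦ u).const_mul (-(1 / (N₁ : ℝ)))
    have t2 := ((hΦ (Pc u)).comp u Pc.hasFDerivAt).const_mul (lam2 / (N₁ : ℝ))
    have t3 := ((hasFDerivAt_id u).inner ℝ (hasFDerivAt_id u)).const_mul (lam3 / 2)
    have total := (t1.fun_sub t2).fun_add t3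
    have totalL := total.congr_of_eventuallyEq (f₁ := L) (Filter.EventuallyEq.of_eq (funext fun v => by
      rw [hL v]
      simp only [Function.comp, hPc, id_eq, real_inner_self_eq_norm_sq]))
    refine totalL.congr_fderiv ?_
    ext v
    simp only [InnerProductSpace.toDual_apply_apply, ContinuousLinearMap.add_apply,
      ContinuousLinearMap.sub_apply, ContinuousLinearMap.smul_apply,
      ContinuousLinearMap.comp_apply, innerSL_apply_apply, fderivInnerCLM_apply,
      ContinuousLinearMap.prod_apply, ContinuousLinearMap.coe_id', id_eq,
      hG', inner_add_left, inner_smul_left, inner_neg_left, starRingEnd_apply,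
      star_trivial, smul_eq_mul, hPc]
    rw [hadj (Sg (P u)) v, real_inner_comm v u]
    ring
  have hgradeq : ∀ u, gradient L u = G u := fun u => (hLgrad u).gradient
  have hG0 : (-(1 / (N₁ : ℝ))) • Sg wh + (-(lam2 / (N₁ : ℝ))) • P (Sg (P wh))
      + lam3 • wh = 0 := by
    rw [← hG' wh, ← hgradeq wh]
    exact hgrad
  have key : (-(1 / (N₁ : ℝ))) • P (Sg wh) + (-(lam2 / (N₁ : ℝ))) • P (Sg (P wh))
      + lam3 • P wh = 0 := by
    have h := congrArg P hG0
    rw [hPadd, hPadd, hPsmul, hPsmul, hPsmul, hPP, hP0] at h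
    exact h
  have hsumP : ∑ i ∈ S, P (x i - m wh i) = P (Sg wh) := by
    rw [hSg' wh, hPsum]
  rw [hgradeq, hsumP, ← hSg' (P wh), hG' (P wh), hPP]
  linear_combination (norm := module) key
end

section
/- Let ŵ ∈ ℝ^d be a global minimizer of the loss L. Then (P_k ŵ − ŵ)ᵀ ∇L(P_k ŵ) = (1/N₁) · ŵᵀ (I_d − P_k) ∑_{i∈S} ( x_i − m_i(P_k ŵ) ), where I_d is the d×d identity matrix. (Intermediate identity in the proof of Theorem 2, using (I_d − P_k)P_k = 0 and ∇L(ŵ) = 0.) -/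
open scoped RealInnerProductSpace BigOperators

/-- Intermediate identity in the proof of Theorem 2. -/
theorem excel_inner_identity
    (N d k : ℕ) (hN : 0 < N) (hd : 0 < d) (hk : 0 < k) (hkd : k ≤ d)
    (x : Fin N → EuclideanSpace ℝ (Fin d))
    (E : Fin N → ℕ) (hE : ∀ i, E i = 0 ∨ E i = 1)
    (T : Fin N → ℝ)
    (S : Finset (Fin N)) (hS : S = Finset.univ.filter fun i => E i = 1)
    (hSne : S.Nonempty)
    (N₁ : ℕ) (hN₁ : N₁ = S.card)
    (R : Fin N → Finset (Fin N))
    (hR : ∀ i, R i = Finset.univ.filter fun j => T i ≤ T j)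
    (K : Finset (Fin d)) (hK : K.card = k)
    (P : EuclideanSpace ℝ (Fin d) → EuclideanSpace ℝ (Fin d))
    (hP : ∀ w (a : Fin d), P w a = if a ∈ K then w a else 0)
    (lam2 lam3 : ℝ) (hlam2 : 0 < lam2) (hlam3 : 0 < lam3)
    (L : EuclideanSpace ℝ (Fin d) → ℝ)
    (hL : ∀ w, L w =
      -(1 / (N₁ : ℝ)) * ∑ i ∈ S, (⟪x i, w⟫ - Real.log (∑ j ∈ R i, Real.exp ⟪x j, w⟫))
      - lam2 / (N₁ : ℝ) * ∑ i ∈ S, (⟪x i, P w⟫ - Real.log (∑ j ∈ R i, Real.exp ⟪x j, P w⟫))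
      + lam3 / 2 * ‖w‖ ^ 2)
    (m : EuclideanSpace ℝ (Fin d) → Fin N → EuclideanSpace ℝ (Fin d))
    (hm : ∀ u i, m u i =
      (∑ j ∈ R i, Real.exp ⟪x j, u⟫)⁻¹ • ∑ j ∈ R i, Real.exp ⟪x j, u⟫ • x j)
    (wh : EuclideanSpace ℝ (Fin d)) (hwh : ∀ w, L wh ≤ L w) :
    ⟪P wh - wh, gradient L (P wh)⟫ = 1 / (N₁ : ℝ) *
      ⟪wh, (∑ i ∈ S, (x i - m (P wh) i)) - P (∑ i ∈ S, (x i - m (P wh) i))⟫ := by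
  classical
  -- P is linear
  have hPadd : ∀ u v, P (u + v) = P u + P v := by
    intro u v
    ext a
    simp only [hP, PiLp.add_apply]
    split <;> simp
  have hPsmul : ∀ (c : ℝ) (u), P (c • u) = c • P u := by
    intro c u
    ext a
    simp only [hP, PiLp.smul_apply, smul_eq_mul]
    split <;> simp
  set Plm : EuclideanSpace ℝ (Fin d) →ₗ[ℝ] EuclideanSpace ℝ (Fin d) :=
    { toFun := P, map_add' := hPadd, map_smul' := hPsmul } with hPlm
  set Pc : EuclideanSpace ℝ (Fin d) →L[ℝ] EuclideanSpace ℝ (Fin d) :=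
    Plm.toContinuousLinearMap with hPcdef
  have hPc : ∀ w, Pc w = P w := fun w => rfl
  -- P is self-adjoint
  have hPsa : ∀ u v : EuclideanSpace ℝ (Fin d), ⟪P u, v⟫ = ⟪u, P v⟫ := by
    intro u v
    simp only [PiLp.inner_apply, RCLike.inner_apply, conj_trivial, hP]
    refine Finset.sum_congr rfl fun a _ => ?_
    by_cases h : a ∈ K <;> simp [h]
  -- P is idempotent on wh
  have hPu0 : P (P wh) = P wh := by
    ext a
    by_cases h : a ∈ K <;> simp [hP, h]
  -- positivity of the partition sums
  have hEpos : ∀ i : Fin N, 0 < ∑ j ∈ R i, Real.exp ⟪x j, P wh⟫ := by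
    intro i
    refine Finset.sum_pos (fun j _ => Real.exp_pos _) ⟨i, ?_⟩
    simp [hR]
  -- derivatives of individual summands
  have hinn : ∀ j : Fin N, HasFDerivAt (fun w : EuclideanSpace ℝ (Fin d) => ⟪x j, w⟫)
      (innerSL ℝ (x j)) (P wh) := fun j => (innerSL ℝ (x j)).hasFDerivAt
  have hg : ∀ i : Fin N, HasFDerivAt
      (fun w : EuclideanSpace ℝ (Fin d) =>
        ⟪x i, w⟫ - Real.log (∑ j ∈ R i, Real.exp ⟪x j, w⟫))
      (innerSL ℝ (x i) - (∑ j ∈ R i, Real.exp ⟪x j, P wh⟫)⁻¹ •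
        ∑ j ∈ R i, Real.exp ⟪x j, P wh⟫ • innerSL ℝ (x j)) (P wh) := by
    intro i
    have h2 : HasFDerivAt (fun w : EuclideanSpace ℝ (Fin d) => ∑ j ∈ R i, Real.exp ⟪x j, w⟫)
        (∑ j ∈ R i, Real.exp ⟪x j, P wh⟫ • innerSL ℝ (x j)) (P wh) :=
      HasFDerivAt.fun_sum fun j _ => (hinn j).exp
    exact (hinn i).sub (h2.log (hEpos i).ne')
  -- the derivative CLM pieces
  set D : EuclideanSpace ℝ (Fin d) →L[ℝ] ℝ :=
    ∑ i ∈ S, (innerSL ℝ (x i) - (∑ j ∈ R i, Real.exp ⟪x j, P wh⟫)⁻¹ •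
      ∑ j ∈ R i, Real.exp ⟪x j, P wh⟫ • innerSL ℝ (x j)) with hD
  have hF1 : HasFDerivAt
      (fun w : EuclideanSpace ℝ (Fin d) =>
        ∑ i ∈ S, (⟪x i, w⟫ - Real.log (∑ j ∈ R i, Real.exp ⟪x j, w⟫)))
      D (P wh) := HasFDerivAt.fun_sum fun i _ => hg i
  have hF2 : HasFDerivAt
      (fun w : EuclideanSpace ℝ (Fin d) =>
        ∑ i ∈ S, (⟪x i, P w⟫ - Real.log (∑ j ∈ R i, Real.exp ⟪x j, P w⟫)))
      (D.comp Pc) (P wh) := by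
    have hG : HasFDerivAt
        (fun w : EuclideanSpace ℝ (Fin d) =>
          ∑ i ∈ S, (⟪x i, w⟫ - Real.log (∑ j ∈ R i, Real.exp ⟪x j, w⟫)))
        D (Pc (P wh)) := by
      have : Pc (P wh) = P wh := hPu0
      rw [this]; exact hF1
    exact hG.comp (P wh) Pc.hasFDerivAt
  -- norm-squared part
  have hnsq : HasFDerivAt (fun w : EuclideanSpace ℝ (Fin d) => ⟪w, w⟫)
      ((fderivInnerCLM ℝ (P wh, P wh)).comp
        ((ContinuousLinearMap.id ℝ _).prod (ContinuousLinearMap.id ℝ _))) (P wh) :=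
    (hasFDerivAt_id (P wh)).inner ℝ (hasFDerivAt_id (P wh))
  set Φn : EuclideanSpace ℝ (Fin d) →L[ℝ] ℝ :=
    (fderivInnerCLM ℝ (P wh, P wh)).comp
      ((ContinuousLinearMap.id ℝ _).prod (ContinuousLinearMap.id ℝ _)) with hΦn
  -- the full derivative
  set Φ : EuclideanSpace ℝ (Fin d) →L[ℝ] ℝ :=
    (-(1 / (N₁ : ℝ))) • D - (lam2 / (N₁ : ℝ)) • (D.comp Pc) + (lam3 / 2) • Φn with hΦdef
  have hLder : HasFDerivAt L Φ (P wh) := by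
    have hfun : L = fun w =>
        -(1 / (N₁ : ℝ)) * ∑ i ∈ S, (⟪x i, w⟫ - Real.log (∑ j ∈ R i, Real.exp ⟪x j, w⟫))
        - lam2 / (N₁ : ℝ) * ∑ i ∈ S, (⟪x i, P w⟫ - Real.log (∑ j ∈ R i, Real.exp ⟪x j, P w⟫))
        + lam3 / 2 * ⟪w, w⟫ := by
      funext w
      rw [hL w, real_inner_self_eq_norm_sq]
    rw [hfun]
    exact ((hF1.const_mul _).sub (hF2.const_mul _)).add (hnsq.const_mul _)
  -- express the gradient pairing as Φ applied
  have hgrad : ⟪P wh - wh, gradient L (P wh)⟫ = Φ (P wh - wh) := by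
    rw [real_inner_comm, gradient, hLder.fderiv, InnerProductSpace.toDual_symm_apply]
  rw [hgrad]
  -- kill the second and third terms
  have hPv : Pc (P wh - wh) = 0 := by
    rw [map_sub]
    show P (P wh) - P wh = 0
    rw [hPu0, sub_self]
  have hD0 : (D.comp Pc) (P wh - wh) = 0 := by
    simp [ContinuousLinearMap.comp_apply, hPv]
  have hΦn0 : Φn (P wh - wh) = 0 := by
    have h1 : ⟪P wh, P wh - wh⟫ = 0 := by
      rw [hPsa, ← hPc, hPv, inner_zero_right]
    have h2 : ⟪P wh - wh, P wh⟫ = 0 := by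
      rw [real_inner_comm]; exact h1
    simp [hΦn, ContinuousLinearMap.comp_apply, fderivInnerCLM_apply, h1, h2]
  -- compute D applied
  have hDv : ∀ v : EuclideanSpace ℝ (Fin d),
      D v = ⟪∑ i ∈ S, (x i - m (P wh) i), v⟫ := by
    intro v
    rw [sum_inner]
    rw [hD, ContinuousLinearMap.sum_apply]
    refine Finset.sum_congr rfl fun i _ => ?_
    rw [inner_sub_left, ContinuousLinearMap.sub_apply, innerSL_apply_apply]
    congr 1
    rw [hm, real_inner_smul_left, ContinuousLinearMap.smul_apply, smul_eq_mul]
    congr 1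
    rw [sum_inner, ContinuousLinearMap.sum_apply]
    refine Finset.sum_congr rfl fun j _ => ?_
    rw [real_inner_smul_left, ContinuousLinearMap.smul_apply, innerSL_apply_apply, smul_eq_mul]
  have hΦv : Φ (P wh - wh) = -(1 / (N₁ : ℝ)) * ⟪∑ i ∈ S, (x i - m (P wh) i), P wh - wh⟫ := by
    simp only [hΦdef, ContinuousLinearMap.add_apply, ContinuousLinearMap.sub_apply,
      ContinuousLinearMap.smul_apply, hD0, hΦn0, smul_eq_mul, mul_zero, sub_zero, add_zero]
    rw [hDv]
  rw [hΦv]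
  set A : EuclideanSpace ℝ (Fin d) := ∑ i ∈ S, (x i - m (P wh) i) with hA
  have hAP : ⟪A, P wh⟫ = ⟪wh, P A⟫ := by
    rw [← hPsa, real_inner_comm]
  rw [inner_sub_right, inner_sub_right, hAP, real_inner_comm A wh]
  ring
end
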